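/- Let A be a commutative associative unital ℂ-algebra and D a derivation of A. Then the superspace L(A,D) = A ⊕ ηA with bracket [a,b] = aD(b) - D(a)b, [a, ηb] = η(aD(b) - (1/2)D(a)b), [ηa, ηb] = ab (even·even, even·odd, odd·odd respectively) is a Lie superalgebra: the bracket is super-skewsymmetric and satisfies the super Jacobi identity. -/
import Mathlib

/-- The parity grading on `A × A`: `A × 0` is the even part, `0 × A` the odd part. -/
def evenodd (A : Type*) [AddCommGroup A] [Module ℂ A] (i : ZMod 2) :
    Submodule ℂ (A × A) :=
  if i = 0 then (⊤ : Submodule ℂ A).prod ⊥ else (⊥ : Submodule ℂ A).prod ⊤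

/-- The bracket of `L(A,D) = A ⊕ ηA`:
`[a,b] = aD(b) - D(a)b`, `[a, ηb] = η(aD(b) - (1/2)D(a)b)`, `[ηa, ηb] = ab`. -/
noncomputable def lbr {A : Type*} [CommRing A] [Algebra ℂ A]
    (D : A →ₗ[ℂ] A) (u v : A × A) : A × A :=
  (u.1 * D v.1 - D u.1 * v.1 + u.2 * v.2,
   (u.1 * D v.2 - (1/2 : ℂ) • (D u.1 * v.2)) - (v.1 * D u.2 - (1/2 : ℂ) • (D v.1 * u.2)))

lemma mem_evenodd0 {A : Type*} [AddCommGroup A] [Module ℂ A] {x : A × A} :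
    x ∈ evenodd A 0 ↔ x.2 = 0 := by
  simp [evenodd, Submodule.mem_prod]

lemma mem_evenodd1 {A : Type*} [AddCommGroup A] [Module ℂ A] {x : A × A} :
    x ∈ evenodd A 1 ↔ x.1 = 0 := by
  simp [evenodd, Submodule.mem_prod]

lemma zmod2cases (i : ZMod 2) : i = 0 ∨ i = 1 := by revert i; decide

lemma zmod2_oneone : (1 + 1 : ZMod 2) = 0 := by decide

set_option maxHeartbeats 1000000 in
/-- For a commutative associative unital ℂ-algebra `A` with derivation `D`,
`L(A,D) = A ⊕ ηA` with the above bracket is a Lie superalgebra: the bracket respects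
the grading, is super-skewsymmetric, and satisfies the super Jacobi identity. -/
theorem stmt_3 (A : Type*) [CommRing A] [Algebra ℂ A]
    (D : A →ₗ[ℂ] A) (hD : ∀ a b : A, D (a * b) = a * D b + D a * b) :
    (∀ (i j : ZMod 2) (x y : A × A), x ∈ evenodd A i → y ∈ evenodd A j →
        lbr D x y ∈ evenodd A (i + j)) ∧
    (∀ (i j : ZMod 2) (x y : A × A), x ∈ evenodd A i → y ∈ evenodd A j →
        lbr D x y = -(((-1 : ℂ) ^ (i.val * j.val)) • lbr D y x)) ∧
    (∀ (i j k : ZMod 2) (x y z : A × A),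
        x ∈ evenodd A i → y ∈ evenodd A j → z ∈ evenodd A k →
        ((-1 : ℂ) ^ (i.val * k.val)) • lbr D (lbr D x y) z
          + ((-1 : ℂ) ^ (j.val * i.val)) • lbr D (lbr D y z) x
          + ((-1 : ℂ) ^ (k.val * j.val)) • lbr D (lbr D z x) y = 0) := by
  refine ⟨?_, ?_, ?_⟩
  · intro i j x y hx hy
    obtain ⟨x1, x2⟩ := x; obtain ⟨y1, y2⟩ := y
    rcases zmod2cases i with rfl | rfl <;> rcases zmod2cases j with rfl | rfl <;>
      simp only [mem_evenodd0, mem_evenodd1] at hx hy <;> subst hx <;> subst hy <;>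
      simp [lbr, zero_add, add_zero, zmod2_oneone, mem_evenodd0, mem_evenodd1]
  · intro i j x y hx hy
    obtain ⟨x1, x2⟩ := x; obtain ⟨y1, y2⟩ := y
    rcases zmod2cases i with rfl | rfl <;> rcases zmod2cases j with rfl | rfl <;>
      simp only [mem_evenodd0, mem_evenodd1] at hx hy <;> subst hx <;> subst hy <;>
      simp only [lbr, map_sub, map_add, map_smul, map_zero, hD, ZMod.val_one, ZMod.val_zero,
        Nat.mul_zero, Nat.zero_mul, Nat.mul_one, pow_zero, pow_one, one_smul, neg_smul,
        smul_zero, mul_zero, zero_mul, sub_zero, zero_sub, add_zero, zero_add, neg_zero,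
        neg_neg, Prod.smul_mk, Prod.mk_add_mk, Prod.neg_mk, Prod.mk.injEq] <;>
      (try simp only [hD, map_sub, map_add, map_smul, map_zero]) <;>
      (try simp only [hD, map_sub, map_add, map_smul, map_zero]) <;>
      constructor <;>
      first
        | (simp; done)
        | (ring_nf
           try simp only [smul_mul_assoc, mul_smul_comm, smul_smul, mul_two, mul_one]
           try ring_nf
           try (match_scalars <;> norm_num))
  · intro i j k x y z hx hy hz
    obtain ⟨x1, x2⟩ := x; obtain ⟨y1, y2⟩ := y; obtain ⟨z1, z2⟩ := z
    have h2 : (2:A) * algebraMap ℂ A (1/2) = 1 := by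
      rw [show (2:A) = algebraMap ℂ A 2 from (map_ofNat _ 2).symm, ← map_mul]; norm_num
    rcases zmod2cases i with rfl | rfl <;> rcases zmod2cases j with rfl | rfl <;>
      rcases zmod2cases k with rfl | rfl
    all_goals
      simp only [mem_evenodd0, mem_evenodd1] at hx hy hz
      subst hx; subst hy; subst hz
      simp only [lbr, map_sub, map_add, map_smul, map_zero, hD, ZMod.val_one, ZMod.val_zero,
        Nat.mul_zero, Nat.zero_mul, Nat.mul_one, pow_zero, pow_one, one_smul, neg_smul,
        smul_zero, mul_zero, zero_mul, sub_zero, zero_sub, add_zero, zero_add, neg_zero,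
        neg_neg, Prod.smul_mk, Prod.mk_add_mk, Prod.neg_mk, Prod.mk_eq_zero]
      try simp only [hD, map_neg, map_sub, map_add, map_smul, map_zero, smul_sub, smul_add,
        smul_neg, smul_smul]
      try simp only [Algebra.smul_def, map_mul, map_one, map_inv₀, map_ofNat]
      refine ⟨?_, ?_⟩ <;>
      first
        | trivial
        | linear_combination (0:A) * h2
        | linear_combination ((-1:A)*(D x1)*(y2)*(z2)) * h2
        | linear_combination ((-1:A)*(D y1)*(x2)*(z2)) * h2
        | linear_combination ((-1:A)*(D z1)*(x2)*(y2)) * h2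
        | linear_combination ((1:A)*(D x2)*(y2)*(z2) + (1:A)*(D y2)*(x2)*(z2) + (1:A)*(D z2)*(x2)*(y2)) * h2
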